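/- Conformal invariance of the modified teleparallel Lagrangian: for every continuously differentiable coframe ϑ on U, every continuously differentiable s : U → (0,∞) and every continuously differentiable h : U → ℝ, the rescaled data ϑ̃^j := e^h ϑ^j and s̃ := e^{−3h} s satisfy s̃·λ(l̃, m̃, ñ) = s·λ(l, m, n) at every point of U, where l̃ := ϑ̃⁰ + ϑ̃³ = e^h l, m̃ := ϑ̃¹ + iϑ̃² = e^h m, ñ := ϑ̃⁰ − ϑ̃³ = e^h n. -/

import Mathlib

noncomputable section

open scoped Matrix

/-- Points of ℝ⁴. -/
abbrev Pt : Type := Fin 4 → ℝ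

/-- Partial derivative ∂_α of a function on ℝ⁴. -/
def pd {E : Type*} [NormedAddCommGroup E] [NormedSpace ℝ E]
    (α : Fin 4) (f : Pt → E) (x : Pt) : E :=
  fderiv ℝ f x (Pi.single α 1)

/-- o_{jk} = o^{jk} = diag(1,-1,-1,-1). -/
def oM : Fin 4 → Fin 4 → ℝ := fun j k => if j = k then (if j = 0 then 1 else -1) else 0

/-- Totally antisymmetric symbol, ε_{0123} = 1. -/
def eps (a b c d : Fin 4) : ℝ :=
  ∑ σ : Equiv.Perm (Fin 4),
    if σ 0 = a ∧ σ 1 = b ∧ σ 2 = c ∧ σ 3 = d then ((Equiv.Perm.sign σ : ℤ) : ℝ) else 0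

/-- Determinant det(ϑ^j_α) of a coframe. -/
def cofDet (ϑ : Fin 4 → Pt → Fin 4 → ℝ) (x : Pt) : ℝ :=
  Matrix.det (Matrix.of fun j α => ϑ j x α)

/-- l := ϑ⁰ + ϑ³. -/
def lC (ϑ : Fin 4 → Pt → Fin 4 → ℝ) (x : Pt) (α : Fin 4) : ℂ :=
  (ϑ 0 x α : ℂ) + (ϑ 3 x α : ℂ)

/-- m := ϑ¹ + iϑ². -/
def mC (ϑ : Fin 4 → Pt → Fin 4 → ℝ) (x : Pt) (α : Fin 4) : ℂ :=
  (ϑ 1 x α : ℂ) + Complex.I * (ϑ 2 x α : ℂ)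

/-- n := ϑ⁰ - ϑ³. -/
def nC (ϑ : Fin 4 → Pt → Fin 4 → ℝ) (x : Pt) (α : Fin 4) : ℂ :=
  (ϑ 0 x α : ℂ) - (ϑ 3 x α : ℂ)

/-- The teleparallel Lagrangian density
λ(l,m,n) := (1/6) ε^{αβγδ} l_α (n_β ∂_γ l_δ − m̄_β ∂_γ m_δ − m_β ∂_γ m̄_δ). -/
def lam (l m n : Pt → Fin 4 → ℂ) (x : Pt) : ℂ :=
  (1/6 : ℂ) * ∑ α : Fin 4, ∑ β : Fin 4, ∑ γ : Fin 4, ∑ δ : Fin 4,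
    (eps α β γ δ : ℂ) * l x α *
      (n x β * pd γ (fun y => l y δ) x
        - (starRingEnd ℂ) (m x β) * pd γ (fun y => m y δ) x
        - m x β * pd γ (fun y => (starRingEnd ℂ) (m y δ)) x)

/-- (du)_{αβ} := ∂_α u_β − ∂_β u_α. -/
def dcov (u : Pt → Fin 4 → ℝ) (α β : Fin 4) (x : Pt) : ℝ :=
  pd α (fun y => u y β) x - pd β (fun y => u y α) x

/-- Axial torsion T^ax(ϑ)_{αβγ}. -/
def Tax (ϑ : Fin 4 → Pt → Fin 4 → ℝ) (α β γ : Fin 4) (x : Pt) : ℝ :=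
  (1/3 : ℝ) * ∑ j : Fin 4, ∑ k : Fin 4, oM j k *
    (ϑ j x α * dcov (ϑ k) β γ x + ϑ j x β * dcov (ϑ k) γ α x + ϑ j x γ * dcov (ϑ k) α β x)

/-- Metric g_{αβ} := o_{jk} ϑ^j_α ϑ^k_β. -/
def gmat (ϑ : Fin 4 → Pt → Fin 4 → ℝ) (x : Pt) : Matrix (Fin 4) (Fin 4) ℝ :=
  Matrix.of fun α β => ∑ j : Fin 4, ∑ k : Fin 4, oM j k * ϑ j x α * ϑ k x β

/-- Inverse metric g^{αβ}. -/
def ginv (ϑ : Fin 4 → Pt → Fin 4 → ℝ) (x : Pt) : Matrix (Fin 4) (Fin 4) ℝ :=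
  (gmat ϑ x)⁻¹

/-- Christoffel symbols Γ^β_{αγ}. -/
def Chr (ϑ : Fin 4 → Pt → Fin 4 → ℝ) (β α γ : Fin 4) (x : Pt) : ℝ :=
  (1/2 : ℝ) * ∑ δ : Fin 4, ginv ϑ x β δ *
    (pd α (fun y => gmat ϑ y γ δ) x + pd γ (fun y => gmat ϑ y α δ) x
      - pd δ (fun y => gmat ϑ y α γ) x)

/-- Levi-Civita covariant derivative ∇_α u_β of a complex covector field. -/
def covC (ϑ : Fin 4 → Pt → Fin 4 → ℝ) (u : Pt → Fin 4 → ℂ) (α β : Fin 4) (x : Pt) : ℂ :=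
  pd α (fun y => u y β) x - ∑ γ : Fin 4, (Chr ϑ γ α β x : ℂ) * u x γ

/-- Levi-Civita covariant derivative ∇_γ F_{αβ} of a complex 2-form. -/
def covF (ϑ : Fin 4 → Pt → Fin 4 → ℝ) (F : Pt → Fin 4 → Fin 4 → ℂ) (γ α β : Fin 4) (x : Pt) : ℂ :=
  pd γ (fun y => F y α β) x - ∑ δ : Fin 4, (Chr ϑ δ γ α x : ℂ) * F x δ β
    - ∑ δ : Fin 4, (Chr ϑ δ γ β x : ℂ) * F x α δ

/-- The 2-form (l∧m)_{αβ}. -/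
def lmForm (ϑ : Fin 4 → Pt → Fin 4 → ℝ) (x : Pt) (α β : Fin 4) : ℂ :=
  lC ϑ x α * mC ϑ x β - lC ϑ x β * mC ϑ x α

/-- The Griffiths–Newing covector v_α := ∇^β (l∧m)_{αβ} − m^β ∇_α l_β. -/
def vGN (ϑ : Fin 4 → Pt → Fin 4 → ℝ) (α : Fin 4) (x : Pt) : ℂ :=
  (∑ β : Fin 4, ∑ γ : Fin 4, (ginv ϑ x β γ : ℂ) * covF ϑ (fun y a b => lmForm ϑ y a b) γ α β x)
  - ∑ β : Fin 4, ∑ γ : Fin 4, (ginv ϑ x β γ : ℂ) * mC ϑ x γ * covC ϑ (fun y b => lC ϑ y b) α β x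

/-- l^α := g^{αβ} l_β. -/
def lup (ϑ : Fin 4 → Pt → Fin 4 → ℝ) (x : Pt) (α : Fin 4) : ℂ :=
  ∑ β : Fin 4, (ginv ϑ x α β : ℂ) * lC ϑ x β

/-- Divergence ∇_α l^α := ∂_α l^α + Γ^α_{αγ} l^γ. -/
def divl (ϑ : Fin 4 → Pt → Fin 4 → ℝ) (x : Pt) : ℂ :=
  ∑ α : Fin 4, (pd α (fun y => lup ϑ y α) x
    + ∑ γ : Fin 4, (Chr ϑ α α γ x : ℂ) * lup ϑ x γ)

/-- Components of the 4-form L_tele(ϑ) = l ∧ T^ax. -/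
def LteleForm (ϑ : Fin 4 → Pt → Fin 4 → ℝ) (α β γ δ : Fin 4) (x : Pt) : ℂ :=
  lC ϑ x α * (Tax ϑ β γ δ x : ℂ) - lC ϑ x β * (Tax ϑ α γ δ x : ℂ)
    + lC ϑ x γ * (Tax ϑ α β δ x : ℂ) - lC ϑ x δ * (Tax ϑ α β γ x : ℂ)

/-- Hodge star of a complex 4-form: ★F := (1/24) √|det g| F^{αβγδ} ε_{αβγδ}. -/
def star4C (ϑ : Fin 4 → Pt → Fin 4 → ℝ) (F : Fin 4 → Fin 4 → Fin 4 → Fin 4 → ℂ) (x : Pt) : ℂ :=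
  (1/24 : ℂ) * (cofDet ϑ x : ℂ) *
    ∑ α : Fin 4, ∑ β : Fin 4, ∑ γ : Fin 4, ∑ δ : Fin 4,
      ∑ α' : Fin 4, ∑ β' : Fin 4, ∑ γ' : Fin 4, ∑ δ' : Fin 4,
        (ginv ϑ x α α' : ℂ) * (ginv ϑ x β β' : ℂ) * (ginv ϑ x γ γ' : ℂ) * (ginv ϑ x δ δ' : ℂ) *
          F α' β' γ' δ' * (eps α β γ δ : ℂ)

/-- Hodge star of a real 4-form. -/
def star4 (ϑ : Fin 4 → Pt → Fin 4 → ℝ) (F : Fin 4 → Fin 4 → Fin 4 → Fin 4 → ℝ) (x : Pt) : ℝ :=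
  (1/24 : ℝ) * cofDet ϑ x *
    ∑ α : Fin 4, ∑ β : Fin 4, ∑ γ : Fin 4, ∑ δ : Fin 4,
      ∑ α' : Fin 4, ∑ β' : Fin 4, ∑ γ' : Fin 4, ∑ δ' : Fin 4,
        ginv ϑ x α α' * ginv ϑ x β β' * ginv ϑ x γ γ' * ginv ϑ x δ δ' *
          F α' β' γ' δ' * eps α β γ δ

/-- ★L_tele(ϑ). -/
def starLtele (ϑ : Fin 4 → Pt → Fin 4 → ℝ) (x : Pt) : ℂ :=
  star4C ϑ (fun α β γ δ => LteleForm ϑ α β γ δ x) x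


section AuxConformal

lemma eps_swap_ad' (a b c d : Fin 4) : eps d b c a = - eps a b c d := by
  unfold eps
  rw [← Finset.sum_neg_distrib]
  refine Fintype.sum_equiv (Equiv.mulRight (Equiv.swap (0 : Fin 4) 3)) _ _ fun σ => ?_
  have hs : Equiv.Perm.sign (σ * Equiv.swap (0 : Fin 4) 3) = - Equiv.Perm.sign σ := by
    rw [Equiv.Perm.sign_mul, Equiv.Perm.sign_swap (by decide)]; exact mul_neg_one _
  simp only [Equiv.coe_mulRight, Equiv.Perm.mul_apply, hs]
  by_cases h0 : σ 0 = d <;> by_cases h1 : σ 1 = b <;> by_cases h2 : σ 2 = c <;>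
    by_cases h3 : σ 3 = a <;>
    simp [h0, h1, h2, h3, Equiv.swap_apply_left, Equiv.swap_apply_right,
      Equiv.swap_apply_of_ne_of_ne]

lemma eps_swap_bd' (a b c d : Fin 4) : eps a d c b = - eps a b c d := by
  unfold eps
  rw [← Finset.sum_neg_distrib]
  refine Fintype.sum_equiv (Equiv.mulRight (Equiv.swap (1 : Fin 4) 3)) _ _ fun σ => ?_
  have hs : Equiv.Perm.sign (σ * Equiv.swap (1 : Fin 4) 3) = - Equiv.Perm.sign σ := by
    rw [Equiv.Perm.sign_mul, Equiv.Perm.sign_swap (by decide)]; exact mul_neg_one _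
  simp only [Equiv.coe_mulRight, Equiv.Perm.mul_apply, hs]
  by_cases h0 : σ 0 = a <;> by_cases h1 : σ 1 = d <;> by_cases h2 : σ 2 = c <;>
    by_cases h3 : σ 3 = b <;>
    simp [h0, h1, h2, h3, Equiv.swap_apply_left, Equiv.swap_apply_right,
      Equiv.swap_apply_of_ne_of_ne]

lemma sum4_swap14 (f : Fin 4 → Fin 4 → Fin 4 → Fin 4 → ℂ) :
    (∑ a : Fin 4, ∑ b : Fin 4, ∑ c : Fin 4, ∑ d : Fin 4, f a b c d)
  = ∑ a : Fin 4, ∑ b : Fin 4, ∑ c : Fin 4, ∑ d : Fin 4, f d b c a := by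
  simp only [Fin.sum_univ_four]; ring

lemma sum4_swap24 (f : Fin 4 → Fin 4 → Fin 4 → Fin 4 → ℂ) :
    (∑ a : Fin 4, ∑ b : Fin 4, ∑ c : Fin 4, ∑ d : Fin 4, f a b c d)
  = ∑ a : Fin 4, ∑ b : Fin 4, ∑ c : Fin 4, ∑ d : Fin 4, f a d c b := by
  simp only [Fin.sum_univ_four]; ring

lemma vanish14 (L N C : Fin 4 → ℂ) :
    (∑ a : Fin 4, ∑ b : Fin 4, ∑ c : Fin 4, ∑ d : Fin 4,
      (eps a b c d : ℂ) * (L a * N b * C c * L d)) = 0 := by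
  set S := ∑ a : Fin 4, ∑ b : Fin 4, ∑ c : Fin 4, ∑ d : Fin 4,
      (eps a b c d : ℂ) * (L a * N b * C c * L d) with hS
  have h2 : S = -S := by
    calc S = ∑ a : Fin 4, ∑ b : Fin 4, ∑ c : Fin 4, ∑ d : Fin 4,
        (eps d b c a : ℂ) * (L d * N b * C c * L a) :=
          sum4_swap14 (fun a b c d => (eps a b c d : ℂ) * (L a * N b * C c * L d))
    _ = ∑ a : Fin 4, ∑ b : Fin 4, ∑ c : Fin 4, ∑ d : Fin 4,
        -((eps a b c d : ℂ) * (L a * N b * C c * L d)) := by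
          refine Finset.sum_congr rfl fun a _ => Finset.sum_congr rfl fun b _ =>
            Finset.sum_congr rfl fun c _ => Finset.sum_congr rfl fun d _ => ?_
          rw [eps_swap_ad' a b c d]; push_cast; ring
    _ = -S := by simp [hS, Finset.sum_neg_distrib]
  have h3 : (2 : ℂ) * S = 0 := by linear_combination h2
  simpa using h3

lemma vanish24 (L P Q C : Fin 4 → ℂ) :
    (∑ a : Fin 4, ∑ b : Fin 4, ∑ c : Fin 4, ∑ d : Fin 4,
      (eps a b c d : ℂ) * (L a * C c * (P b * Q d + Q b * P d))) = 0 := by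
  set S := ∑ a : Fin 4, ∑ b : Fin 4, ∑ c : Fin 4, ∑ d : Fin 4,
      (eps a b c d : ℂ) * (L a * C c * (P b * Q d + Q b * P d)) with hS
  have h2 : S = -S := by
    calc S = ∑ a : Fin 4, ∑ b : Fin 4, ∑ c : Fin 4, ∑ d : Fin 4,
        (eps a d c b : ℂ) * (L a * C c * (P d * Q b + Q d * P b)) :=
          sum4_swap24 (fun a b c d => (eps a b c d : ℂ) * (L a * C c * (P b * Q d + Q b * P d)))
    _ = ∑ a : Fin 4, ∑ b : Fin 4, ∑ c : Fin 4, ∑ d : Fin 4,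
        -((eps a b c d : ℂ) * (L a * C c * (P b * Q d + Q b * P d))) := by
          refine Finset.sum_congr rfl fun a _ => Finset.sum_congr rfl fun b _ =>
            Finset.sum_congr rfl fun c _ => Finset.sum_congr rfl fun d _ => ?_
          rw [eps_swap_bd' a b c d]; push_cast; ring
    _ = -S := by simp [hS, Finset.sum_neg_distrib]
  have h3 : (2 : ℂ) * S = 0 := by linear_combination h2
  simpa using h3

lemma pd_exp_mul (h : Pt → ℝ) (f : Pt → ℂ) (x : Pt) (γ : Fin 4)
    (hh : DifferentiableAt ℝ h x) (hf : DifferentiableAt ℝ f x) :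
    pd γ (fun y => ((Real.exp (h y) : ℝ) : ℂ) * f y) x
      = (Real.exp (h x) : ℂ) * (((pd γ h x : ℝ) : ℂ) * f x + pd γ f x) := by
  have hexp : HasFDerivAt (fun y => Real.exp (h y)) (Real.exp (h x) • fderiv ℝ h x) x :=
    (Real.hasDerivAt_exp (h x)).comp_hasFDerivAt x hh.hasFDerivAt
  have hE : HasFDerivAt (fun y => ((Real.exp (h y) : ℝ) : ℂ))
      (Complex.ofRealCLM.comp (Real.exp (h x) • fderiv ℝ h x)) x :=
    Complex.ofRealCLM.hasFDerivAt.comp x hexp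
  unfold pd
  rw [fderiv_fun_mul hE.differentiableAt hf, hE.fderiv]
  simp only [ContinuousLinearMap.add_apply, ContinuousLinearMap.smul_apply,
    ContinuousLinearMap.comp_apply, Complex.ofRealCLM_apply, smul_eq_mul]
  push_cast
  ring

end AuxConformal

/-- Conformal invariance of the modified teleparallel Lagrangian: the rescaled data
ϑ̃^j := e^h ϑ^j, s̃ := e^{−3h} s satisfy s̃·λ(l̃, m̃, ñ) = s·λ(l, m, n),
where l̃ = e^h l, m̃ = e^h m, ñ = e^h n. -/
theorem modified_teleparallel_conformal_invariance
    (U : Set Pt) (hU : IsOpen U) (ϑ : Fin 4 → Pt → Fin 4 → ℝ)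
    (hreg : ∀ j, ContDiffOn ℝ 1 (ϑ j) U)
    (hdet : ∀ x ∈ U, 0 < cofDet ϑ x)
    (s : Pt → ℝ) (hs : ContDiffOn ℝ 1 s U) (hspos : ∀ x ∈ U, 0 < s x)
    (h : Pt → ℝ) (hh : ContDiffOn ℝ 1 h U) :
    ∀ x ∈ U,
      ((Real.exp (-3 * h x) * s x : ℝ) : ℂ) *
        lam (fun y α => (Real.exp (h y) : ℂ) * lC ϑ y α)
          (fun y α => (Real.exp (h y) : ℂ) * mC ϑ y α)
          (fun y α => (Real.exp (h y) : ℂ) * nC ϑ y α) x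
      = (s x : ℂ) * lam (fun y α => lC ϑ y α) (fun y α => mC ϑ y α) (fun y α => nC ϑ y α) x := by
  intro x hx
  have hhx : DifferentiableAt ℝ h x :=
    ((hh.contDiffAt (hU.mem_nhds hx)).differentiableAt one_ne_zero)
  have hθ : ∀ j α, DifferentiableAt ℝ (fun y => ϑ j y α) x := fun j α =>
    differentiableAt_pi.mp
      (((hreg j).contDiffAt (hU.mem_nhds hx)).differentiableAt one_ne_zero) α
  have hθC : ∀ j α, DifferentiableAt ℝ (fun y => ((ϑ j y α : ℝ) : ℂ)) x := fun j α =>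
    Complex.ofRealCLM.differentiableAt.comp x (hθ j α)
  have hl : ∀ δ, DifferentiableAt ℝ (fun y => lC ϑ y δ) x := fun δ => by
    unfold lC; exact (hθC 0 δ).add (hθC 3 δ)
  have hn : ∀ δ, DifferentiableAt ℝ (fun y => nC ϑ y δ) x := fun δ => by
    unfold nC; exact (hθC 0 δ).sub (hθC 3 δ)
  have hm : ∀ δ, DifferentiableAt ℝ (fun y => mC ϑ y δ) x := fun δ => by
    unfold mC; exact (hθC 1 δ).add ((hθC 2 δ).const_mul Complex.I)
  have hmb : ∀ δ, DifferentiableAt ℝ (fun y => (starRingEnd ℂ) (mC ϑ y δ)) x := fun δ => by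
    have : (fun y => (starRingEnd ℂ) (mC ϑ y δ))
        = fun y => Complex.conjCLE (mC ϑ y δ) := by
      funext y; simp [Complex.conjCLE_apply]
    rw [this]
    exact Complex.conjCLE.differentiableAt.comp x (hm δ)
  set E : ℂ := ((Real.exp (h x) : ℝ) : ℂ) with hE
  set c : Fin 4 → ℂ := fun γ => ((pd γ h x : ℝ) : ℂ) with hc
  have key_l : ∀ γ δ, pd γ (fun y => ((Real.exp (h y) : ℝ) : ℂ) * lC ϑ y δ) x
      = E * (c γ * lC ϑ x δ + pd γ (fun y => lC ϑ y δ) x) := fun γ δ =>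
    pd_exp_mul h _ x γ hhx (hl δ)
  have key_m : ∀ γ δ, pd γ (fun y => ((Real.exp (h y) : ℝ) : ℂ) * mC ϑ y δ) x
      = E * (c γ * mC ϑ x δ + pd γ (fun y => mC ϑ y δ) x) := fun γ δ =>
    pd_exp_mul h _ x γ hhx (hm δ)
  have key_mb : ∀ γ δ,
      pd γ (fun y => (starRingEnd ℂ) (((Real.exp (h y) : ℝ) : ℂ) * mC ϑ y δ)) x
      = E * (c γ * (starRingEnd ℂ) (mC ϑ x δ)
          + pd γ (fun y => (starRingEnd ℂ) (mC ϑ y δ)) x) := by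
    intro γ δ
    have hfun : (fun y => (starRingEnd ℂ) (((Real.exp (h y) : ℝ) : ℂ) * mC ϑ y δ))
        = fun y => ((Real.exp (h y) : ℝ) : ℂ) * (starRingEnd ℂ) (mC ϑ y δ) := by
      funext y; rw [map_mul, Complex.conj_ofReal]
    rw [hfun]
    exact pd_exp_mul h _ x γ hhx (hmb δ)
  have key_mb2 : ∀ γ δ,
      pd γ (fun y => ((Real.exp (h y) : ℝ) : ℂ) * (starRingEnd ℂ) (mC ϑ y δ)) x
      = E * (c γ * (starRingEnd ℂ) (mC ϑ x δ)
          + pd γ (fun y => (starRingEnd ℂ) (mC ϑ y δ)) x) := fun γ δ =>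
    pd_exp_mul h _ x γ hhx (hmb δ)
  unfold lam
  simp only [key_l, key_m, key_mb, key_mb2, map_mul, Complex.conj_ofReal]
  simp only [← hE]
  have split : ∀ a b g d : Fin 4,
      (eps a b g d : ℂ) * (E * lC ϑ x a) *
        (E * nC ϑ x b * (E * (c g * lC ϑ x d + pd g (fun y => lC ϑ y d) x))
          - E * (starRingEnd ℂ) (mC ϑ x b) *
              (E * (c g * mC ϑ x d + pd g (fun y => mC ϑ y d) x))
          - E * mC ϑ x b *
              (E * (c g * (starRingEnd ℂ) (mC ϑ x d)
                + pd g (fun y => (starRingEnd ℂ) (mC ϑ y d)) x)))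
      = E ^ 3 * ((eps a b g d : ℂ) * lC ϑ x a *
          (nC ϑ x b * pd g (fun y => lC ϑ y d) x
            - (starRingEnd ℂ) (mC ϑ x b) * pd g (fun y => mC ϑ y d) x
            - mC ϑ x b * pd g (fun y => (starRingEnd ℂ) (mC ϑ y d)) x))
        + E ^ 3 * ((eps a b g d : ℂ) * (lC ϑ x a * nC ϑ x b * c g * lC ϑ x d))
        - E ^ 3 * ((eps a b g d : ℂ) * (lC ϑ x a * c g *
            ((starRingEnd ℂ) (mC ϑ x b) * mC ϑ x d
              + mC ϑ x b * (starRingEnd ℂ) (mC ϑ x d)))) := by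
    intro a b g d; ring
  simp only [split, Finset.sum_add_distrib, Finset.sum_sub_distrib, ← Finset.mul_sum]
  rw [vanish14 (fun a => lC ϑ x a) (fun a => nC ϑ x a) c,
    vanish24 (fun a => lC ϑ x a) (fun a => (starRingEnd ℂ) (mC ϑ x a)) (fun a => mC ϑ x a) c]
  have hr : Real.exp (-3 * h x) * Real.exp (h x) ^ 3 = 1 := by
    rw [← Real.exp_nat_mul, ← Real.exp_add]
    norm_num
  have hE3 : Complex.exp (-3 * (h x : ℂ)) * E ^ 3 = 1 := by
    have : (-3 * (h x : ℂ)) = ((-3 * h x : ℝ) : ℂ) := by push_cast; ring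
    rw [hE, this, ← Complex.ofReal_exp, ← Complex.ofReal_pow, ← Complex.ofReal_mul, hr,
      Complex.ofReal_one]
  push_cast
  linear_combination (((s x : ℝ) : ℂ) * (1 / 6 : ℂ) *
      (∑ α : Fin 4, ∑ β : Fin 4, ∑ γ : Fin 4, ∑ δ : Fin 4,
        (eps α β γ δ : ℂ) * lC ϑ x α *
          (nC ϑ x β * pd γ (fun y => lC ϑ y δ) x
            - (starRingEnd ℂ) (mC ϑ x β) * pd γ (fun y => mC ϑ y δ) x
            - mC ϑ x β * pd γ (fun y => (starRingEnd ℂ) (mC ϑ y δ)) x))) * hE3
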